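/- If H is the K_1-corona of a finite simple graph G with d vertices, then every minimal dominating set of H has exactly d elements; in particular, H is domination-unmixed. -/

import Mathlib

/-- `D` is a dominating set of the graph `G`: every vertex is in `D` or adjacent to a
vertex of `D`. -/
def IsDomSet {V : Type*} (G : SimpleGraph V) (D : Finset V) : Prop :=
  ∀ v : V, v ∈ D ∨ ∃ u ∈ D, G.Adj u v

/-- `D` is a minimal dominating set of `G`: it is dominating and properly contains no
dominating set. -/
def IsMinDomSet {V : Type*} (G : SimpleGraph V) (D : Finset V) : Prop :=
  IsDomSet G D ∧ ∀ D' ⊆ D, IsDomSet G D' → D' = D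

/-- The `K₁`-corona of `G`: add to `G` a pendant vertex (whisker) attached to each
vertex of `G`.  The original vertices are `Sum.inl i` and the whisker vertices are
`Sum.inr i`. -/
def corona {V : Type*} (G : SimpleGraph V) : SimpleGraph (V ⊕ V) where
  Adj a b :=
    (∃ i j, a = Sum.inl i ∧ b = Sum.inl j ∧ G.Adj i j) ∨
    (∃ i, a = Sum.inl i ∧ b = Sum.inr i) ∨
    (∃ i, a = Sum.inr i ∧ b = Sum.inl i)
  symm := by
    constructor
    rintro a b (⟨i, j, rfl, rfl, h⟩ | ⟨i, rfl, rfl⟩ | ⟨i, rfl, rfl⟩)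
    · exact Or.inl ⟨j, i, rfl, rfl, h.symm⟩
    · exact Or.inr (Or.inr ⟨i, rfl, rfl⟩)
    · exact Or.inr (Or.inl ⟨i, rfl, rfl⟩)
  loopless := by
    constructor
    rintro a (⟨i, j, rfl, h1, h⟩ | ⟨i, rfl, h1⟩ | ⟨i, rfl, h1⟩)
    · obtain rfl := Sum.inl_injective h1
      exact G.loopless.irrefl i h
    · exact Sum.inl_ne_inr h1
    · exact Sum.inr_ne_inl h1

/-- A graph is domination-unmixed if all of its minimal dominating sets have the same
size. -/
def DomUnmixed {V : Type*} (G : SimpleGraph V) : Prop :=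
  ∀ D D' : Finset V, IsMinDomSet G D → IsMinDomSet G D' → D.card = D'.card

/-- Every minimal dominating set of the `K₁`-corona of a graph `G` with `d` vertices
has exactly `d` elements; in particular the corona is domination-unmixed. -/
theorem stmt7 {V : Type*} [Fintype V] (G : SimpleGraph V) :
    (∀ D : Finset (V ⊕ V), IsMinDomSet (corona G) D → D.card = Fintype.card V) ∧
    DomUnmixed (corona G) := by
  classical
  have key : ∀ D : Finset (V ⊕ V), IsMinDomSet (corona G) D → D.card = Fintype.card V := by
    rintro D ⟨hdom, hmin⟩
    have covers : ∀ i : V, Sum.inl i ∈ D ∨ Sum.inr i ∈ D := by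
      intro i
      rcases hdom (Sum.inr i) with h | ⟨u, hu, hadj⟩
      · exact Or.inr h
      · rcases hadj with ⟨a, b, _, hb, _⟩ | ⟨a, ha, hb⟩ | ⟨a, _, hb⟩
        · exact absurd hb.symm (Sum.inl_ne_inr)
        · obtain rfl : i = a := Sum.inr_injective hb
          exact Or.inl (ha ▸ hu)
        · exact absurd hb.symm (Sum.inl_ne_inr)
    have notboth : ∀ i : V, ¬(Sum.inl i ∈ D ∧ Sum.inr i ∈ D) := by
      rintro i ⟨hl, hr⟩
      set D' := D.erase (Sum.inr i) with hD'
      have hsub : D' ⊆ D := Finset.erase_subset _ _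
      have hdom' : IsDomSet (corona G) D' := by
        intro v
        rcases hdom v with hv | ⟨u, hu, hadj⟩
        · by_cases hvi : v = Sum.inr (α := V) i
          · subst hvi
            refine Or.inr ⟨Sum.inl i, Finset.mem_erase.2 ⟨Sum.inl_ne_inr, hl⟩, ?_⟩
            exact Or.inr (Or.inl ⟨i, rfl, rfl⟩)
          · exact Or.inl (Finset.mem_erase.2 ⟨hvi, hv⟩)
        · by_cases hui : u = Sum.inr (α := V) i
          · subst hui
            rcases hadj with ⟨a, b, ha, _, _⟩ | ⟨a, ha, _⟩ | ⟨a, ha, hb⟩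
            · exact absurd ha (Sum.inr_ne_inl)
            · exact absurd ha (Sum.inr_ne_inl)
            · obtain rfl : i = a := Sum.inr_injective ha
              exact Or.inl (hb ▸ Finset.mem_erase.2 ⟨Sum.inl_ne_inr, hl⟩)
          · exact Or.inr ⟨u, Finset.mem_erase.2 ⟨hui, hu⟩, hadj⟩
      have heq : D' = D := hmin D' hsub hdom'
      have : Sum.inr i ∈ D' := heq ▸ hr
      exact (Finset.notMem_erase _ _) this
    have hbij : Function.Bijective (fun x : {x // x ∈ D} => Sum.elim id id x.1) := by
      constructor
      · rintro ⟨x, hx⟩ ⟨y, hy⟩ h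
        simp only at h
        apply Subtype.ext
        rcases x with a | a <;> rcases y with b | b <;>
          simp only [Sum.elim_inl, Sum.elim_inr, id] at h <;> subst h
        · rfl
        · exact absurd ⟨hx, hy⟩ (notboth a)
        · exact absurd ⟨hy, hx⟩ (notboth a)
        · rfl
      · intro i
        rcases covers i with h | h
        · exact ⟨⟨Sum.inl i, h⟩, rfl⟩
        · exact ⟨⟨Sum.inr i, h⟩, rfl⟩
    rw [← Fintype.card_coe D]
    exact Fintype.card_of_bijective hbij
  exact ⟨key, fun D D' hD hD' => (key D hD).trans (key D' hD').symm⟩
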